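/- Let α be irrational with irrationality exponent γ(α) = inf{β : liminf_{q→∞} q^β ‖qα‖ > 0}, and let R : 𝕋 → 𝕋, R(s) = s + α. Then for Leb×Leb-almost every (t,s) ∈ 𝕋², liminf_n log M_{R,n}(t,s)/(−log n) ≤ 1/γ(α), where M_{R,n}(t,s) = min_{0≤i,j≤n−1} ‖R^i(t) − R^j(s)‖. -/

import Mathlib

open MeasureTheory Filter Metric Topology

open Set
open scoped ENNReal NNReal

/-- Shortest distance between the `n`-orbits of `x` and `y` under `T`. -/
noncomputable def shortestDist {X : Type*} [PseudoMetricSpace X]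
    (T : X → X) (n : ℕ) (x y : X) : ℝ :=
  sInf {d' | ∃ i < n, ∃ j < n, d' = dist (T^[i] x) (T^[j] y)}

local notation "𝕋" => AddCircle (1:ℝ)

lemma ac_norm_coe_le (x : ℝ) : ‖(x : 𝕋)‖ ≤ |x| := by
  rw [AddCircle.norm_eq]; simpa using round_le x 0

lemma ac_nat_mul (α : ℝ) (q : ℕ) : ((q:ℤ) • ((α:ℝ) : 𝕋)) = ((q * α : ℝ) : 𝕋) := by
  rw [← AddCircle.coe_zsmul]
  push_cast
  norm_num

lemma ac_norm_pos (α : ℝ) (hα : Irrational α) (q : ℕ) (hq : 1 ≤ q) :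
    0 < ‖((q * α : ℝ) : 𝕋)‖ := by
  rw [norm_pos_iff]
  intro h
  rw [AddCircle.coe_eq_zero_iff] at h
  obtain ⟨j, hj⟩ := h
  have : α = (j : ℝ) / q := by
    field_simp
    simp only [zsmul_eq_mul, mul_one] at hj
    linarith [hj]
  exact (hα.ne_rat (j / q)) (by rw [this]; push_cast; ring)

-- iterate of rotation

lemma rot_iterate (a : 𝕋) (n : ℕ) (x : 𝕋) : (fun s => s + a)^[n] x = x + n • a := by
  induction n with
  | zero => simp
  | succ n ih => rw [Function.iterate_succ_apply', ih, succ_nsmul]; abel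

lemma null_of_freq_small {X : Type*} [MeasurableSpace X] (μ : Measure X) (B : ℕ → Set X)
    (h : ∀ η : ℝ, 0 < η → ∃ᶠ n in atTop, μ (B n) ≤ ENNReal.ofReal η) :
    μ {x | ∀ᶠ n in atTop, x ∈ B n} = 0 := by
  have hsub : {x | ∀ᶠ n in atTop, x ∈ B n} ⊆ ⋃ N : ℕ, ⋂ n, ⋂ (_ : N ≤ n), B n := by
    intro x hx
    obtain ⟨N, hN⟩ := eventually_atTop.1 hx
    exact mem_iUnion.2 ⟨N, by simpa using fun n hn => hN n hn⟩
  refine measure_mono_null hsub (measure_iUnion_null fun N => ?_)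
  have key : ∀ η : ℝ, 0 < η → μ (⋂ n, ⋂ (_ : N ≤ n), B n) ≤ ENNReal.ofReal η := by
    intro η hη
    obtain ⟨n, hn, hbound⟩ := (frequently_atTop.1 (h η hη)) N
    exact le_trans (measure_mono (biInter_subset_of_mem hn)) hbound
  have : μ (⋂ n, ⋂ (_ : N ≤ n), B n) ≤ 0 := by
    refine ENNReal.le_of_forall_pos_le_add fun ε hε _ => ?_
    simpa [ENNReal.ofReal_coe_nnreal] using key ε (by exact_mod_cast hε)
  simpa using this

lemma freq_small (α : ℝ) (hα : Irrational α) (β : ℝ) (hβ : β < 1) (ε : ℝ) (hε : 0 < ε) :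
    ∃ᶠ q : ℕ in atTop, (q : ℝ) ^ β * ‖((q * α : ℝ) : 𝕋)‖ < ε := by
  rw [frequently_atTop]
  intro N₀
  obtain ⟨κ, hκpos, hκ⟩ : ∃ κ > 0, ∀ q' : ℕ, 1 ≤ q' → q' ≤ N₀ + 1 → κ ≤ ‖((q' * α : ℝ) : 𝕋)‖ := by
    have hne : (Finset.Icc 1 (N₀+1)).Nonempty := ⟨1, by simp⟩
    refine ⟨(Finset.Icc 1 (N₀+1)).inf' hne (fun q' => ‖((q' * α : ℝ) : 𝕋)‖), ?_, ?_⟩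
    · rw [gt_iff_lt, Finset.lt_inf'_iff]
      intro q' hq'
      exact ac_norm_pos α hα q' (Finset.mem_Icc.1 hq').1
    · intro q' h1 h2
      exact Finset.inf'_le _ (Finset.mem_Icc.2 ⟨h1, h2⟩)
  set β₁ := max β 0 with hβ₁
  have hβ₁0 : 0 ≤ β₁ := le_max_right _ _
  have hββ₁ : β ≤ β₁ := le_max_left _ _
  have hβ₁1 : β₁ < 1 := by rw [hβ₁, max_lt_iff]; exact ⟨hβ, one_pos⟩
  have htend : Tendsto (fun N : ℕ => (N:ℝ) ^ (β₁ - 1)) atTop (𝓝 0) := by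
    have h1 : Tendsto (fun x : ℝ => x ^ (-(1 - β₁))) atTop (𝓝 0) :=
      tendsto_rpow_neg_atTop (by linarith)
    have := h1.comp (tendsto_natCast_atTop_atTop (R := ℝ))
    simpa [Function.comp_def, neg_sub] using this
  have htend2 : Tendsto (fun N : ℕ => (1:ℝ)/(N+1)) atTop (𝓝 0) :=
    tendsto_one_div_add_atTop_nhds_zero_nat
  have hev : ∀ᶠ N : ℕ in atTop,
      ((N:ℝ) ^ (β₁ - 1) < ε ∧ (1:ℝ)/(N+1) < κ) ∧ 1 ≤ N := by
    refine Filter.Eventually.and (Filter.Eventually.and ?_ ?_) (eventually_ge_atTop 1)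
    · exact htend.eventually_lt_const hε
    · exact htend2.eventually_lt_const hκpos
  obtain ⟨N, ⟨⟨hN1, hN2⟩, hN3⟩⟩ := hev.exists
  obtain ⟨j, k, hk0, hkN, hdir⟩ := Real.exists_int_int_abs_mul_sub_le α (n := N) (by omega)
  set q : ℕ := k.toNat with hq
  have hqk : (q : ℤ) = k := Int.toNat_of_nonneg hk0.le
  have hq1 : 1 ≤ q := by omega
  have hqN : q ≤ N := by omega
  have hqcast : ((q:ℕ):ℝ) = ((k:ℤ):ℝ) := by exact_mod_cast congrArg (Int.cast : ℤ → ℝ) hqk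
  have hnorm : ‖((q * α : ℝ) : 𝕋)‖ ≤ 1/(N+1) := by
    have hcoe : ((q * α : ℝ) : 𝕋) = (((k:ℝ) * α - j : ℝ) : 𝕋) := by
      rw [hqcast]
      have : (((k:ℝ) * α - j : ℝ) : 𝕋) = (((k:ℝ) * α : ℝ) : 𝕋) - ((j:ℝ) : 𝕋) := by
        push_cast
        ring_nf
        rfl
      rw [this]
      rw [show ((j:ℝ) : 𝕋) = 0 from by
        rw [AddCircle.coe_eq_zero_iff]; exact ⟨j, by simp⟩]
      simp
    rw [hcoe]
    calc ‖(((k:ℝ) * α - j : ℝ) : 𝕋)‖ ≤ |(k:ℝ) * α - j| := ac_norm_coe_le _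
      _ ≤ 1/(N+1) := by exact_mod_cast hdir
  refine ⟨q, ?_, ?_⟩
  · -- q ≥ N₀
    by_contra hcon
    push_neg at hcon
    have h1 : κ ≤ ‖((q * α : ℝ) : 𝕋)‖ := hκ q hq1 (by omega)
    have : κ < κ := lt_of_le_of_lt (h1.trans hnorm) hN2
    exact lt_irrefl _ this
  · have hq1' : (1:ℝ) ≤ (q:ℝ) := by exact_mod_cast hq1
    have hb1 : (q:ℝ) ^ β ≤ (q:ℝ) ^ β₁ := Real.rpow_le_rpow_of_exponent_le hq1' hββ₁
    have hb2 : (q:ℝ) ^ β₁ ≤ (N:ℝ) ^ β₁ :=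
      Real.rpow_le_rpow (by positivity) (by exact_mod_cast hqN) hβ₁0
    have hnn : 0 ≤ ‖((q * α : ℝ) : 𝕋)‖ := norm_nonneg _
    have hNpos : (0:ℝ) < N := by exact_mod_cast hN3
    calc (q:ℝ) ^ β * ‖((q * α : ℝ) : 𝕋)‖
        ≤ (N:ℝ) ^ β₁ * (1/(N+1)) := by
          apply mul_le_mul (hb1.trans hb2) hnorm hnn (by positivity)
      _ ≤ (N:ℝ) ^ β₁ * (1/N) := by
          apply mul_le_mul_of_nonneg_left _ (by positivity)
          apply div_le_div_of_nonneg_left one_pos.le hNpos (by linarith)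
      _ = (N:ℝ) ^ (β₁ - 1) := by
          rw [Real.rpow_sub hNpos, Real.rpow_one]
          ring
      _ < ε := hN1

lemma S_ge_one (α : ℝ) (hα : Irrational α) (β : ℝ)
    (h : 0 < liminf (fun q : ℕ => (q : ℝ) ^ β * ‖((q * α : ℝ) : 𝕋)‖) atTop) : 1 ≤ β := by
  by_contra hcon
  push_neg at hcon
  set u : ℕ → ℝ := fun q => (q : ℝ) ^ β * ‖((q * α : ℝ) : 𝕋)‖ with hu
  have hnn : ∀ q, 0 ≤ u q := fun q => mul_nonneg (Real.rpow_nonneg (by positivity) _) (norm_nonneg _)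
  have hle : ∀ ε : ℝ, 0 < ε → liminf u atTop ≤ ε := by
    intro ε hε
    exact liminf_le_of_frequently_le ((freq_small α hα β hcon ε hε).mono fun q hq => hq.le)
      (isBoundedUnder_of ⟨0, fun n => hnn n⟩)
  have : liminf u atTop ≤ 0 := by
    by_contra h0
    push_neg at h0
    linarith [hle (liminf u atTop / 2) (by linarith)]
  linarith

lemma freqC (α : ℝ) (hα : Irrational α) (γ : ℝ)
    (hne : {β : ℝ | 0 < liminf
      (fun q : ℕ => (q : ℝ) ^ β * ‖((q * α : ℝ) : AddCircle (1:ℝ))‖) atTop}.Nonempty)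
    (hγ : γ = sInf {β : ℝ | 0 < liminf
      (fun q : ℕ => (q : ℝ) ^ β * ‖((q * α : ℝ) : AddCircle (1:ℝ))‖) atTop}) :
    (1 ≤ γ) ∧ ∃ C > 0, ∃ᶠ q : ℕ in atTop, ‖((q * α : ℝ) : 𝕋)‖ ≤ C * (q:ℝ) ^ (-γ) := by
  set S := {β : ℝ | 0 < liminf
      (fun q : ℕ => (q : ℝ) ^ β * ‖((q * α : ℝ) : AddCircle (1:ℝ))‖) atTop} with hS
  have hγ1 : 1 ≤ γ := by
    rw [hγ]
    exact le_csInf hne fun β hβ => S_ge_one α hα β hβ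
  obtain ⟨β₀, hβ₀⟩ := hne
  have hγβ₀ : γ ≤ β₀ := by
    rw [hγ]
    exact csInf_le ⟨1, fun β hβ => S_ge_one α hα β hβ⟩ hβ₀
  set u : ℕ → ℝ := fun q => (q : ℝ) ^ β₀ * ‖((q * α : ℝ) : 𝕋)‖ with hu
  have hpos : 0 < liminf u atTop := hβ₀
  set L := liminf u atTop with hL
  have hbdd : BddAbove {a | ∀ᶠ q in atTop, a ≤ u q} := by
    by_contra hb
    rw [hL, liminf_eq, Real.sSup_of_not_bddAbove hb] at hpos
    exact lt_irrefl _ hpos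
  have hfreq : ∃ᶠ q in atTop, u q ≤ L + 1 := by
    by_contra hc
    rw [not_frequently] at hc
    have hmem : (L + 1) ∈ {a | ∀ᶠ q in atTop, a ≤ u q} :=
      hc.mono fun q hq => by push_neg at hq; linarith
    have h2 : L + 1 ≤ L := by
      calc L + 1 ≤ sSup {a | ∀ᶠ q in atTop, a ≤ u q} := le_csSup hbdd hmem
        _ = L := by rw [hL, liminf_eq]
    linarith
  refine ⟨hγ1, L + 1, by linarith, ?_⟩
  refine (hfreq.and_eventually (eventually_ge_atTop 1)).mono ?_
  rintro q ⟨hq1, hq2⟩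
  have hq1' : (1:ℝ) ≤ (q:ℝ) := by exact_mod_cast hq2
  have hqpow : (0:ℝ) < (q:ℝ) ^ β₀ := Real.rpow_pos_of_pos (by linarith) _
  have hqval : (q:ℝ)^β₀ * ‖((q * α : ℝ) : 𝕋)‖ ≤ L + 1 := hq1
  have h1 : ‖((q * α : ℝ) : 𝕋)‖ ≤ (L+1) * (q:ℝ) ^ (-β₀) := by
    rw [Real.rpow_neg (by positivity), mul_comm (L+1) _, ← div_eq_inv_mul, le_div_iff₀ hqpow]
    linarith [hqval]
  refine h1.trans ?_
  apply mul_le_mul_of_nonneg_left _ (by linarith [hpos])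
  exact Real.rpow_le_rpow_of_exponent_le hq1' (by linarith)

lemma real_bound (C η₀ γ c Q δ nn : ℝ) (hC : 0 < C) (hη : 0 < η₀) (hQ : 1 ≤ Q)
    (hc : 0 < c)
    (hδ : δ ≤ C * Q ^ (-γ)) (hδ0 : 0 ≤ δ)
    (hn1 : η₀ * Q ^ γ ≤ nn) (hn2 : nn ≤ η₀ * Q ^ γ + 1)
    (E1 : 2 * (η₀ ^ c)⁻¹ * Q ^ (1 - γ * c) ≤ η₀ * C)
    (E2 : 2 * C * Q ^ (-γ) ≤ η₀ * C)
    (E3 : 2 * C * Q ^ (1 - γ) ≤ η₀ * C) :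
    Q * (2 * (nn ^ (-c) + ((nn + Q) / Q) * δ)) ≤ 6 * (η₀ * C) := by
  have hQ0 : (0:ℝ) < Q := by linarith
  have hP : (0:ℝ) < Q ^ γ := Real.rpow_pos_of_pos hQ0 _
  have hnn0 : (0:ℝ) < nn := lt_of_lt_of_le (by positivity) hn1
  have hid : Q ^ γ * Q ^ (-γ) = 1 := by
    rw [← Real.rpow_add hQ0]; simp
  have hid2 : Q * Q ^ (-γ) = Q ^ (1-γ) := by
    rw [show (1-γ) = 1 + -γ by ring, Real.rpow_add hQ0, Real.rpow_one]
  have hid3 : Q * (Q ^ (γ*c))⁻¹ = Q ^ (1-γ*c) := by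
    rw [show (1-γ*c) = 1 + -(γ*c) by ring, Real.rpow_add hQ0, Real.rpow_one,
      Real.rpow_neg hQ0.le]
  have expand : Q * (2 * (nn ^ (-c) + ((nn + Q) / Q) * δ))
      = 2*Q*(nn ^ (-c)) + 2*nn*δ + 2*Q*δ := by
    field_simp
    ring
  -- A1
  have hpow : (η₀ * Q ^ γ) ^ c ≤ nn ^ c := Real.rpow_le_rpow (by positivity) hn1 hc.le
  have hsplit : (η₀ * Q ^ γ) ^ c = η₀ ^ c * Q ^ (γ*c) := by
    rw [Real.mul_rpow hη.le hP.le, Real.rpow_mul hQ0.le]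
  have hA1 : 2*Q*(nn ^ (-c)) ≤ η₀ * C := by
    have h1 : nn ^ (-c) ≤ (η₀ ^ c * Q ^ (γ*c))⁻¹ := by
      rw [Real.rpow_neg hnn0.le]
      rw [← hsplit]
      exact inv_anti₀ (by positivity) hpow
    calc 2*Q*(nn ^ (-c)) ≤ 2*Q*(η₀ ^ c * Q ^ (γ*c))⁻¹ := by
          apply mul_le_mul_of_nonneg_left h1 (by positivity)
      _ = 2 * (η₀ ^ c)⁻¹ * (Q * (Q ^ (γ*c))⁻¹) := by
          rw [mul_inv]
          ring
      _ = 2 * (η₀ ^ c)⁻¹ * Q ^ (1 - γ*c) := by rw [hid3]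
      _ ≤ η₀ * C := E1
  -- A2
  have hA2 : 2*nn*δ ≤ 2*(η₀*C) + 2*C*Q^(-γ) := by
    have h1 : nn*δ ≤ (η₀ * Q ^ γ + 1)*(C * Q ^ (-γ)) :=
      mul_le_mul hn2 hδ hδ0 (by positivity)
    have h2 : (η₀ * Q ^ γ + 1)*(C * Q ^ (-γ)) = η₀*C*(Q^γ * Q^(-γ)) + C*Q^(-γ) := by ring
    rw [h2, hid] at h1
    linarith
  -- A3
  have hA3 : 2*Q*δ ≤ 2*C*Q^(1-γ) := by
    have h1 : Q*δ ≤ Q*(C*Q^(-γ)) := mul_le_mul_of_nonneg_left hδ hQ0.le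
    have h2 : Q*(C*Q^(-γ)) = C*(Q*Q^(-γ)) := by ring
    rw [h2, hid2] at h1
    linarith
  rw [expand]
  linarith

lemma natCast_mul_ofReal (n : ℕ) (x : ℝ) :
    (n : ℝ≥0∞) * ENNReal.ofReal x = ENNReal.ofReal ((n:ℝ) * x) := by
  rw [ENNReal.ofReal_mul (Nat.cast_nonneg n), ENNReal.ofReal_natCast]

lemma cover_bound (a : 𝕋) (B : Set 𝕋) (s : Finset ℤ) (r : ℝ)
    (hcov : ∀ x ∈ B, ∃ b ∈ s, x ∈ closedBall ((b : ℤ) • a) r) :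
    volume B ≤ (s.card : ℝ≥0∞) * ENNReal.ofReal (2*r) := by
  have hsub : B ⊆ ⋃ b ∈ s, closedBall ((b:ℤ) • a) r := by
    intro x hx
    obtain ⟨b, hb, hxb⟩ := hcov x hx
    exact Set.mem_biUnion hb hxb
  calc volume B ≤ volume (⋃ b ∈ s, closedBall ((b:ℤ) • a) r) := measure_mono hsub
    _ ≤ ∑ b ∈ s, volume (closedBall ((b:ℤ) • a) r) := measure_biUnion_finset_le s _
    _ ≤ ∑ _b ∈ s, ENNReal.ofReal (2*r) := by
        apply Finset.sum_le_sum
        intro b _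
        rw [AddCircle.volume_closedBall]
        exact ENNReal.ofReal_le_ofReal (min_le_right _ _)
    _ = (s.card : ℝ≥0∞) * ENNReal.ofReal (2*r) := by
        rw [Finset.sum_const, nsmul_eq_mul]

lemma ev_rpow_le (A B e : ℝ) (hB : 0 < B) (he : e < 0) :
    ∀ᶠ q : ℕ in atTop, A * (q:ℝ) ^ e ≤ B := by
  have h1 : Tendsto (fun x : ℝ => A * x ^ e) atTop (𝓝 (A * 0)) := by
    apply Tendsto.const_mul
    have := tendsto_rpow_neg_atTop (y := -e) (by linarith)
    simpa using this
  have h2 := (h1.comp (tendsto_natCast_atTop_atTop (R := ℝ)))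
  rw [mul_zero] at h2
  exact (h2.eventually_le_const hB)

lemma coreAE (α : ℝ) (hα : Irrational α) (γ c : ℝ) (hγ1 : 1 ≤ γ)
    (hCex : ∃ C > 0, ∃ᶠ q : ℕ in atTop, ‖((q * α : ℝ) : 𝕋)‖ ≤ C * (q:ℝ) ^ (-γ))
    (hc : 1/γ < c) :
    ∀ᵐ x : 𝕋 ∂volume, ∃ᶠ n : ℕ in atTop,
      ∀ k : ℤ, |k| < (n:ℤ) → (n:ℝ) ^ (-c) ≤ ‖x + k • ((α : ℝ) : 𝕋)‖ := by
  have hγ0 : (0:ℝ) < γ := by linarith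
  have hc0 : (0:ℝ) < c := lt_trans (by positivity) hc
  have hγc : 1 < γ * c := by
    rw [div_lt_iff₀ hγ0] at hc
    linarith [hc]
  set a : 𝕋 := ((α : ℝ) : 𝕋) with ha
  set B : ℕ → Set 𝕋 := fun n => {x | ∃ k : ℤ, |k| < (n:ℤ) ∧ ‖x + k • a‖ < (n:ℝ) ^ (-c)}
    with hB
  rw [ae_iff]
  have hsub : {x : 𝕋 | ¬ ∃ᶠ n : ℕ in atTop,
        ∀ k : ℤ, |k| < (n:ℤ) → (n:ℝ) ^ (-c) ≤ ‖x + k • a‖}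
      ⊆ {x : 𝕋 | ∀ᶠ n in atTop, x ∈ B n} := by
    intro x hx
    rw [mem_setOf_eq, not_frequently] at hx
    refine hx.mono fun n hn => ?_
    push_neg at hn
    obtain ⟨k, hk1, hk2⟩ := hn
    exact ⟨k, hk1, hk2⟩
  refine measure_mono_null hsub (null_of_freq_small _ B ?_)
  intro η hη
  by_cases hc1 : 1 < c
  · -- easy case: eventually small
    refine Filter.Eventually.frequently ?_
    have hev : ∀ᶠ n : ℕ in atTop, (2*(n:ℝ)) * (2*(n:ℝ) ^ (-c)) ≤ η ∧ 1 ≤ n := by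
      refine Filter.Eventually.and ?_ (eventually_ge_atTop 1)
      have := ev_rpow_le 4 η (1-c) hη (by linarith)
      refine this.mono fun n hn => ?_
      rcases Nat.eq_zero_or_pos n with h0 | h0
      · subst h0; norm_num; positivity
      have hn0 : (0:ℝ) < (n:ℝ) := by exact_mod_cast h0
      have : (2*(n:ℝ)) * (2*(n:ℝ) ^ (-c)) = 4 * (n:ℝ) ^ (1-c) := by
        rw [show (1-c) = 1 + -c by ring, Real.rpow_add hn0, Real.rpow_one]
        ring
      linarith [this ▸ hn]
    refine hev.mono fun n ⟨hn, hn1⟩ => ?_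
    have hcovp : ∀ x ∈ B n, ∃ b ∈ Finset.Icc (-(n:ℤ)+1) ((n:ℤ)-1),
        x ∈ closedBall ((b:ℤ) • a) ((n:ℝ) ^ (-c)) := by
      rintro x ⟨k, hk1, hk2⟩
      refine ⟨-k, ?_, ?_⟩
      · rw [Finset.mem_Icc]
        have h := abs_lt.1 hk1
        omega
      · rw [mem_closedBall, dist_eq_norm, neg_zsmul, sub_neg_eq_add]
        exact hk2.le
    have hcov := cover_bound a (B n) (Finset.Icc (-(n:ℤ)+1) ((n:ℤ)-1)) ((n:ℝ) ^ (-c)) hcovp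
    refine hcov.trans ?_
    have hcardn : (Finset.Icc (-(n:ℤ)+1) ((n:ℤ)-1)).card = 2*n - 1 := by
      rw [Int.card_Icc]; omega
    have hcard : ((Finset.Icc (-(n:ℤ)+1) ((n:ℤ)-1)).card : ℝ) ≤ 2*(n:ℝ) := by
      rw [hcardn]
      rw [Nat.cast_sub (by omega : 1 ≤ 2*n)]
      push_cast
      linarith
    calc ((Finset.Icc (-(n:ℤ)+1) ((n:ℤ)-1)).card : ℝ≥0∞) * ENNReal.ofReal (2*(n:ℝ) ^ (-c))
        = ENNReal.ofReal (((Finset.Icc (-(n:ℤ)+1) ((n:ℤ)-1)).card : ℝ) * (2*(n:ℝ) ^ (-c))) :=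
          natCast_mul_ofReal _ _
      _ ≤ ENNReal.ofReal η := ENNReal.ofReal_le_ofReal
          (le_trans (mul_le_mul_of_nonneg_right hcard (by positivity)) hn)
  · -- hard case: c ≤ 1
    push_neg at hc1
    obtain ⟨C, hC0, hCfreq⟩ := hCex
    set η₀ : ℝ := η / (6*C) with hη₀
    have hη₀0 : 0 < η₀ := div_pos hη (by positivity)
    rw [frequently_atTop]
    intro N
    have hev : ∀ᶠ q : ℕ in atTop,
        ((2 * (η₀ ^ c)⁻¹ * (q:ℝ) ^ (1 - γ*c) ≤ η₀ * C ∧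
          2 * C * (q:ℝ) ^ (-γ) ≤ η₀ * C) ∧
         (2 * C * (q:ℝ) ^ (1 - γ) ≤ η₀ * C ∧ (N:ℝ) ≤ η₀ * (q:ℝ) ^ γ)) ∧ 1 ≤ q := by
      have hγ1' : 1 < γ := by nlinarith [hγc, hc0, hc1, hγ0]
      refine (Filter.Eventually.and (Filter.Eventually.and ?_ ?_)
        (Filter.Eventually.and ?_ ?_)).and (eventually_ge_atTop 1)
      · exact ev_rpow_le _ _ _ (by positivity) (by linarith)
      · exact ev_rpow_le _ _ _ (by positivity) (by linarith)
      · exact ev_rpow_le _ _ _ (by positivity) (by linarith)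
      · have h1 : Tendsto (fun x:ℝ => η₀ * x ^ γ) atTop atTop :=
          (tendsto_rpow_atTop hγ0).const_mul_atTop hη₀0
        exact ((h1.comp (tendsto_natCast_atTop_atTop (R := ℝ))).eventually_ge_atTop _)
    obtain ⟨q, hδb, ⟨⟨E1, E2⟩, E3, E4⟩, hq1⟩ := (hCfreq.and_eventually hev).exists
    have hQ1 : (1:ℝ) ≤ (q:ℝ) := by exact_mod_cast hq1
    have hQ0 : (0:ℝ) < (q:ℝ) := by linarith
    set δ := ‖((q * α : ℝ) : 𝕋)‖ with hδdef
    have hδ0 : 0 ≤ δ := norm_nonneg _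
    set n : ℕ := ⌈η₀ * (q:ℝ) ^ γ⌉₊ with hndef
    have hn1 : η₀ * (q:ℝ) ^ γ ≤ (n:ℝ) := Nat.le_ceil _
    have hn2 : (n:ℝ) ≤ η₀ * (q:ℝ) ^ γ + 1 := (Nat.ceil_lt_add_one (by positivity)).le
    refine ⟨n, ?_, ?_⟩
    · have : (N:ℝ) ≤ (n:ℝ) := le_trans E4 hn1
      exact_mod_cast this
    · set r := (n:ℝ) ^ (-c) + (((n:ℝ) + (q:ℝ))/(q:ℝ)) * δ with hr
      have hr0 : 0 ≤ r := by
        rw [hr]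
        have h1 : (0:ℝ) ≤ (n:ℝ) ^ (-c) := Real.rpow_nonneg (by positivity) _
        have h2 : (0:ℝ) ≤ (((n:ℝ) + (q:ℝ))/(q:ℝ)) * δ :=
          mul_nonneg (by positivity) hδ0
        linarith
      have hcov : ∀ x ∈ B n, ∃ b ∈ Finset.Icc (0:ℤ) ((q:ℤ)-1), x ∈ closedBall ((b:ℤ) • a) r := by
        rintro x ⟨k, hk1, hk2⟩
        set m : ℤ := -k with hm
        have hmabs : |m| < (n:ℤ) := by rw [hm, abs_neg]; exact hk1
        have hmlt := abs_lt.1 hmabs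
        set b : ℤ := m % (q:ℤ) with hb
        set a' : ℤ := m / (q:ℤ) with ha'
        have hqz : ((q:ℕ):ℤ) ≠ 0 := by exact_mod_cast (by omega : q ≠ 0)
        have hb0 : 0 ≤ b := Int.emod_nonneg m hqz
        have hbq : b < (q:ℤ) := Int.emod_lt_of_pos m (by exact_mod_cast (by omega : 0 < q))
        refine ⟨b, Finset.mem_Icc.2 ⟨hb0, by omega⟩, ?_⟩
        rw [mem_closedBall]
        have hdiv := Int.mul_ediv_add_emod m (q:ℤ)
        have hmb : (q:ℤ) * a' = m - b := by rw [ha', hb]; linarith [hdiv]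
        have habs : (q:ℤ) * |a'| ≤ (n:ℤ) + q := by
          have h1 : |(q:ℤ) * a'| ≤ (n:ℤ) + q := by
            rw [hmb, abs_le]; omega
          rwa [abs_mul, abs_of_nonneg (by positivity : (0:ℤ) ≤ ((q:ℕ):ℤ))] at h1
        have habsR : (|a'| : ℝ) ≤ ((n:ℝ) + (q:ℝ))/(q:ℝ) := by
          rw [le_div_iff₀ hQ0, mul_comm]
          exact_mod_cast habs
        have hd1 : dist x (m • a) = ‖x + k • a‖ := by
          rw [dist_eq_norm, hm, neg_zsmul, sub_neg_eq_add]
        have hd2 : dist (m • a) (b • a) ≤ (((n:ℝ) + (q:ℝ))/(q:ℝ)) * δ := by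
          have hz : (m - b) • a = m • a - b • a := by rw [sub_zsmul, sub_eq_add_neg]
          have hms : m - b = a' * (q:ℤ) := by linarith [hmb]
          rw [dist_eq_norm, ← hz, hms, mul_zsmul]
          calc ‖a' • (((q:ℕ):ℤ) • a)‖ ≤ (|a'| : ℝ) * ‖((q:ℕ):ℤ) • a‖ := by
                simpa [Int.norm_eq_abs] using norm_zsmul_le a' (((q:ℕ):ℤ) • a)
            _ = (|a'| : ℝ) * δ := by rw [ac_nat_mul]
            _ ≤ (((n:ℝ) + (q:ℝ))/(q:ℝ)) * δ := mul_le_mul_of_nonneg_right habsR hδ0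
        calc dist x (b • a) ≤ dist x (m • a) + dist (m • a) (b • a) := dist_triangle _ _ _
          _ ≤ (n:ℝ) ^ (-c) + (((n:ℝ) + (q:ℝ))/(q:ℝ)) * δ := by
              rw [hd1]; linarith [hd2, hk2.le]
          _ = r := hr.symm
      have hbound := cover_bound a (B n) (Finset.Icc (0:ℤ) ((q:ℤ)-1)) r hcov
      refine hbound.trans ?_
      have hcard : (Finset.Icc (0:ℤ) ((q:ℤ)-1)).card = q := by
        rw [Int.card_Icc]; omega
      rw [hcard]
      have harith := real_bound C η₀ γ c (q:ℝ) δ (n:ℝ) hC0 hη₀0 hQ1 hc0 hδb hδ0 hn1 hn2 E1 E2 E3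
      have hfin : 6*(η₀*C) = η := by
        rw [hη₀]; field_simp
      calc ((q:ℕ) : ℝ≥0∞) * ENNReal.ofReal (2*r)
          = ENNReal.ofReal ((q:ℝ) * (2*r)) := natCast_mul_ofReal _ _
        _ ≤ ENNReal.ofReal (6*(η₀*C)) := by
            apply ENNReal.ofReal_le_ofReal
            rw [hr]
            exact harith
        _ = ENNReal.ofReal η := by rw [hfin]

theorem rotation_shortest_distance_liminf (α : ℝ) (hα : Irrational α) (γ : ℝ)
    (hne : {β : ℝ | 0 < liminf
      (fun q : ℕ => (q : ℝ) ^ β * ‖((q * α : ℝ) : AddCircle (1:ℝ))‖) atTop}.Nonempty)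
    (hγ : γ = sInf {β : ℝ | 0 < liminf
      (fun q : ℕ => (q : ℝ) ^ β * ‖((q * α : ℝ) : AddCircle (1:ℝ))‖) atTop}) :
    ∀ᵐ p ∂((volume : Measure (AddCircle (1:ℝ))).prod volume),
      liminf (fun n : ℕ =>
        Real.log (shortestDist (fun s => s + ((α : ℝ) : AddCircle (1:ℝ))) n p.1 p.2) /
          (- Real.log n)) atTop ≤ 1 / γ := by
  obtain ⟨hγ1, hCex⟩ := freqC α hα γ hne hγ
  have hγ0 : (0:ℝ) < γ := by linarith
  set a : 𝕋 := ((α : ℝ) : 𝕋) with ha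
  have hae : ∀ᵐ x : 𝕋 ∂volume, ∀ m : ℕ, ∃ᶠ n : ℕ in atTop,
      ∀ k : ℤ, |k| < (n:ℤ) → (n:ℝ) ^ (-(1/γ + 1/((m:ℝ)+1))) ≤ ‖x + k • a‖ := by
    rw [ae_all_iff]
    intro m
    apply coreAE α hα γ _ hγ1 hCex
    have : 0 < 1/((m:ℝ)+1) := by positivity
    linarith
  haveI : IsProbabilityMeasure (volume : Measure 𝕋) := ⟨by simp [AddCircle.measure_univ]⟩
  have hmp : MeasurePreserving (fun p : 𝕋 × 𝕋 => p.1 - p.2)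
      ((volume : Measure 𝕋).prod volume) volume := by
    have h1 : MeasurePreserving (fun z : 𝕋 × 𝕋 => (z.1 - z.2, z.2))
        ((volume : Measure 𝕋).prod volume) ((volume : Measure 𝕋).prod volume) :=
      measurePreserving_sub_prod _ _
    have h2 : MeasurePreserving (Prod.fst : 𝕋 × 𝕋 → 𝕋)
        ((volume : Measure 𝕋).prod volume) volume := by
      refine ⟨measurable_fst, ?_⟩
      rw [Measure.map_fst_prod]
      simp
    exact h2.comp h1
  have hprod : ∀ᵐ p ∂((volume : Measure 𝕋).prod volume), ∀ m : ℕ, ∃ᶠ n : ℕ in atTop,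
      ∀ k : ℤ, |k| < (n:ℤ) → (n:ℝ) ^ (-(1/γ + 1/((m:ℝ)+1))) ≤ ‖(p.1 - p.2) + k • a‖ := by
    rw [ae_iff] at hae ⊢
    have hpre : {p : 𝕋 × 𝕋 | ¬ ∀ m : ℕ, ∃ᶠ n : ℕ in atTop,
        ∀ k : ℤ, |k| < (n:ℤ) → (n:ℝ) ^ (-(1/γ + 1/((m:ℝ)+1))) ≤ ‖(p.1 - p.2) + k • a‖}
        = (fun p : 𝕋 × 𝕋 => p.1 - p.2) ⁻¹' {x : 𝕋 | ¬ ∀ m : ℕ, ∃ᶠ n : ℕ in atTop,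
        ∀ k : ℤ, |k| < (n:ℤ) → (n:ℝ) ^ (-(1/γ + 1/((m:ℝ)+1))) ≤ ‖x + k • a‖} := rfl
    rw [hpre]
    exact hmp.quasiMeasurePreserving.preimage_null hae
  filter_upwards [hprod] with p hp
  set t := p.1
  set s := p.2
  set R : 𝕋 → 𝕋 := fun x => x + a with hR
  set f : ℕ → ℝ := fun n => Real.log (shortestDist R n t s) / (- Real.log n) with hf
  -- basic SD facts
  have hSD_nonneg : ∀ n : ℕ, 0 ≤ shortestDist R n t s := by
    intro n
    apply Real.sInf_nonneg
    rintro d ⟨i, hi, j, hj, rfl⟩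
    exact dist_nonneg
  have hSD_le : ∀ n : ℕ, 1 ≤ n → shortestDist R n t s ≤ 1/2 := by
    intro n hn
    have hmem : dist t s ∈ {d' | ∃ i < n, ∃ j < n, d' = dist (R^[i] t) (R^[j] s)} :=
      ⟨0, hn, 0, hn, by simp⟩
    have h1 : shortestDist R n t s ≤ dist t s :=
      csInf_le ⟨0, fun d ⟨i, _, j, _, hd⟩ => hd ▸ dist_nonneg⟩ hmem
    refine h1.trans ?_
    rw [dist_eq_norm]
    simpa using AddCircle.norm_le_half_period (1:ℝ) one_ne_zero (x := t - s)
  -- nonneg of f for n ≥ 2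
  have hf_nonneg : ∀ n : ℕ, 2 ≤ n → 0 ≤ f n := by
    intro n hn
    have hlogn : 0 < Real.log n := Real.log_pos (by exact_mod_cast hn)
    have hlogSD : Real.log (shortestDist R n t s) ≤ 0 :=
      Real.log_nonpos (hSD_nonneg n) ((hSD_le n (by omega)).trans (by norm_num))
    have heq : f n = (- Real.log (shortestDist R n t s)) / Real.log n := by
      rw [hf]
      ring
    rw [heq]
    exact div_nonneg (by linarith) hlogn.le
  have hbdd : IsBoundedUnder (· ≥ ·) atTop f :=
    ⟨0, eventually_map.2 ((eventually_ge_atTop 2).mono fun n hn => hf_nonneg n hn)⟩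
  -- key: good n implies f n ≤ c
  have hkey : ∀ (c : ℝ), 0 < c → ∀ n : ℕ, 2 ≤ n →
      (∀ k : ℤ, |k| < (n:ℤ) → (n:ℝ) ^ (-c) ≤ ‖(t - s) + k • a‖) → f n ≤ c := by
    intro c hc n hn hgood
    have hn0 : (0:ℝ) < (n:ℝ) := by positivity
    have hSDge : (n:ℝ) ^ (-c) ≤ shortestDist R n t s := by
      refine le_csInf ⟨dist t s, ⟨0, by omega, 0, by omega, by simp⟩⟩ ?_
      rintro d ⟨i, hi, j, hj, rfl⟩
      have hiter : ∀ (x : 𝕋) (i : ℕ), R^[i] x = x + i • a := fun x i => rot_iterate a i x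
      rw [hiter, hiter, dist_eq_norm]
      have heq : t + i • a - (s + j • a) = (t - s) + ((i:ℤ) - (j:ℤ)) • a := by
        have h1 : ((i:ℤ) - (j:ℤ)) • a = i • a - j • a := by
          rw [sub_zsmul, natCast_zsmul, natCast_zsmul, sub_eq_add_neg]
        rw [h1]
        abel
      rw [heq]
      apply hgood
      rw [abs_lt]
      omega
    have hpow_pos : (0:ℝ) < (n:ℝ) ^ (-c) := Real.rpow_pos_of_pos hn0 _
    have hlog : -(c * Real.log n) ≤ Real.log (shortestDist R n t s) := by
      have := Real.log_le_log hpow_pos hSDge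
      rwa [Real.log_rpow hn0, neg_mul] at this
    have hlogn : 0 < Real.log n := Real.log_pos (by exact_mod_cast hn)
    rw [hf]
    rw [div_le_iff_of_neg (by linarith)]
    linarith
  -- conclude
  by_contra hcon
  push_neg at hcon
  obtain ⟨m, hm⟩ := exists_nat_one_div_lt (show 0 < liminf f atTop - 1/γ by linarith)
  have hc : liminf f atTop ≤ 1/γ + 1/((m:ℝ)+1) := by
    apply liminf_le_of_frequently_le _ hbdd
    refine ((hp m).and_eventually (eventually_ge_atTop 2)).mono ?_
    rintro n ⟨hgood, hn2⟩
    exact hkey _ (by positivity) n hn2 hgood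
  have : (1:ℝ)/((m:ℝ)+1) < liminf f atTop - 1/γ := by exact_mod_cast hm
  linarith
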